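/- Let η ∈ A ∩ H⁴(S¹; ℝ^d) be a constant-speed closed curve with length L = |∂_s η|. Given z ∈ H²(S¹;ℝ^d), suppose σ : S¹ → ℝ solves L² ∂_{ss}σ − |∂_{ss}η|² σ = ∂_s z · ∂_s η + c for some constant c, with ∫₀¹ σ ds = 0. Then w := z − ∂_s(σ ∂_s η) satisfies ∂_s w · ∂_s η ≡ const on S¹, and for every tangent vector v with ∂_s v · ∂_s η ≡ const and ∫₀¹ v ds = 0 we have ∫₀¹ ∂_s(σ ∂_s η) · v ds = 0. -/

import Mathlib

open Real MeasureTheory intervalIntegral RealInnerProductSpace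

noncomputable section

lemma periodic_deriv_aux {E : Type*} [NormedAddCommGroup E] [NormedSpace ℝ E]
    {f : ℝ → E} (hf : Function.Periodic f 1) : Function.Periodic (deriv f) 1 := fun x => by
  have h : (fun y => f (y + 1)) = f := funext hf
  rw [← deriv_comp_add_const f 1 x, h]

lemma contDiff_deriv_aux {E : Type*} [NormedAddCommGroup E] [NormedSpace ℝ E]
    {f : ℝ → E} {n : ℕ} (h : ContDiff ℝ (n + 1) f) : ContDiff ℝ n (deriv f) := by
  have h' : ContDiff ℝ ((n : WithTop ℕ∞) + 1) f := by exact_mod_cast h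
  exact (contDiff_succ_iff_deriv.mp h').2.2

/-- The orthogonal projection onto the tangent space of the manifold of constant-speed
closed curves: `w = z - ∂_s(σ ∂_s η)` is tangent (i.e. `∂_s w · ∂_s η ≡ const`), and
`∂_s(σ ∂_s η)` is `L²`-orthogonal to every tangent vector. -/
theorem stmt1 (d : ℕ)
    (η z : ℝ → EuclideanSpace ℝ (Fin d)) (σ : ℝ → ℝ) (L c : ℝ)
    (hη : ContDiff ℝ 4 η) (hz : ContDiff ℝ 2 z) (hσ : ContDiff ℝ 2 σ)
    (hperη : Function.Periodic η 1) (hperz : Function.Periodic z 1)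
    (hperσ : Function.Periodic σ 1)
    (hLpos : 0 < L) (hspeed : ∀ s, ‖deriv η s‖ = L)
    (hmeanη : (∫ s in (0:ℝ)..1, η s) = 0)
    (hode : ∀ s, L ^ 2 * deriv (deriv σ) s - ‖deriv (deriv η) s‖ ^ 2 * σ s
        = ⟪deriv z s, deriv η s⟫ + c)
    (hσmean : (∫ s in (0:ℝ)..1, σ s) = 0) :
    (∃ C : ℝ, ∀ s,
        ⟪deriv (fun u => z u - deriv (fun r => σ r • deriv η r) u) s, deriv η s⟫ = C) ∧
    (∀ v : ℝ → EuclideanSpace ℝ (Fin d), ContDiff ℝ 1 v → Function.Periodic v 1 →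
        (∃ Cv : ℝ, ∀ s, ⟪deriv v s, deriv η s⟫ = Cv) →
        (∫ s in (0:ℝ)..1, v s) = 0 →
        (∫ s in (0:ℝ)..1, ⟪deriv (fun r => σ r • deriv η r) s, v s⟫) = 0) := by
  set P : ℝ → EuclideanSpace ℝ (Fin d) := fun r => σ r • deriv η r with hPdef
  -- regularity
  have hT3 : ContDiff ℝ 3 (deriv η) := contDiff_deriv_aux hη
  have hT2 : ContDiff ℝ 2 (deriv (deriv η)) := contDiff_deriv_aux hT3
  have hT1 : ContDiff ℝ 1 (deriv (deriv (deriv η))) := contDiff_deriv_aux hT2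
  have hσ1 : ContDiff ℝ 1 (deriv σ) := contDiff_deriv_aux hσ
  have hσ0 : ContDiff ℝ 0 (deriv (deriv σ)) := contDiff_deriv_aux hσ1
  have hz1 : ContDiff ℝ 1 (deriv z) := contDiff_deriv_aux hz
  have hdη : Differentiable ℝ η := hη.differentiable (by norm_num)
  have hdT : Differentiable ℝ (deriv η) := hT3.differentiable (by norm_num)
  have hdT' : Differentiable ℝ (deriv (deriv η)) := hT2.differentiable (by norm_num)
  have hdσ : Differentiable ℝ σ := hσ.differentiable (by norm_num)
  have hdσ' : Differentiable ℝ (deriv σ) := hσ1.differentiable (by norm_num)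
  have hdz : Differentiable ℝ z := hz.differentiable (by norm_num)
  -- orthogonality relations
  have horth : ∀ s, ⟪deriv (deriv η) s, deriv η s⟫ = 0 := by
    intro s
    have hconst : (fun t => ⟪deriv η t, deriv η t⟫) = fun _ => L ^ 2 := by
      funext t
      rw [real_inner_self_eq_norm_sq, hspeed]
    have hd : HasDerivAt (fun t => ⟪deriv η t, deriv η t⟫)
        (⟪deriv η s, deriv (deriv η) s⟫ + ⟪deriv (deriv η) s, deriv η s⟫) s :=
      (hdT s).hasDerivAt.inner ℝ (hdT s).hasDerivAt
    rw [hconst] at hd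
    have h0 := hd.unique (hasDerivAt_const s (L ^ 2))
    rw [real_inner_comm] at h0
    linarith
  have horth2 : ∀ s, ⟪deriv (deriv (deriv η)) s, deriv η s⟫ = -‖deriv (deriv η) s‖ ^ 2 := by
    intro s
    have hconst : (fun t => ⟪deriv (deriv η) t, deriv η t⟫) = fun _ => (0 : ℝ) :=
      funext horth
    have hd : HasDerivAt (fun t => ⟪deriv (deriv η) t, deriv η t⟫)
        (⟪deriv (deriv η) s, deriv (deriv η) s⟫ + ⟪deriv (deriv (deriv η)) s, deriv η s⟫) s :=
      (hdT' s).hasDerivAt.inner ℝ (hdT s).hasDerivAt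
    rw [hconst] at hd
    have h0 := hd.unique (hasDerivAt_const s (0 : ℝ))
    rw [real_inner_self_eq_norm_sq] at h0
    linarith
  -- derivative of P
  have hPd : ∀ s, HasDerivAt P (deriv σ s • deriv η s + σ s • deriv (deriv η) s) s := by
    intro s
    have := (hdσ s).hasDerivAt.smul (hdT s).hasDerivAt
    rw [add_comm]
    exact this
  have hderivP : deriv P = fun s => deriv σ s • deriv η s + σ s • deriv (deriv η) s :=
    funext fun s => (hPd s).deriv
  have hdP : Differentiable ℝ P := fun s => (hPd s).differentiableAt
  have hQd : ∀ s, HasDerivAt (deriv P)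
      (deriv (deriv σ) s • deriv η s + deriv σ s • deriv (deriv η) s
        + (deriv σ s • deriv (deriv η) s + σ s • deriv (deriv (deriv η)) s)) s := by
    intro s
    rw [hderivP]
    have h1 := (hdσ' s).hasDerivAt.smul (hdT s).hasDerivAt
    have h2 := (hdσ s).hasDerivAt.smul (hdT' s).hasDerivAt
    exact (h1.add h2).congr_deriv (by abel)
  have hdQ : Differentiable ℝ (deriv P) := fun s => (hQd s).differentiableAt
  have hTT : ∀ s, ⟪deriv η s, deriv η s⟫ = L ^ 2 := fun s => by
    rw [real_inner_self_eq_norm_sq, hspeed]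
  constructor
  · refine ⟨-c, fun s => ?_⟩
    have hds : deriv (fun u => z u - deriv P u) s = deriv z s - deriv (deriv P) s :=
      deriv_sub (hdz s) (hdQ s)
    rw [hds, inner_sub_left, (hQd s).deriv]
    have hode' := hode s
    simp only [inner_add_left, real_inner_smul_left]
    rw [hTT s, horth s, horth2 s]
    linarith
  · rintro v hv hperv ⟨Cv, hCv⟩ hvmean
    have hdv : Differentiable ℝ v := hv.differentiable one_ne_zero
    have contv : Continuous v := hv.continuous
    have contdv : Continuous (deriv v) := (contDiff_one_iff_deriv.mp hv).2
    have contP : Continuous P := (hσ.continuous.smul hT3.continuous : )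
    have contQ : Continuous (deriv P) := by
      rw [hderivP]
      exact (hσ1.continuous.smul hT3.continuous).add (hσ.continuous.smul hT2.continuous)
    have hIA : IntervalIntegrable (fun s => ⟪P s, deriv v s⟫) volume 0 1 :=
      (contP.inner contdv).intervalIntegrable 0 1
    have hIB : IntervalIntegrable (fun s => ⟪deriv P s, v s⟫) volume 0 1 :=
      (contQ.inner contv).intervalIntegrable 0 1
    have hFd : ∀ s, HasDerivAt (fun t => ⟪P t, v t⟫)
        (⟪P s, deriv v s⟫ + ⟪deriv P s, v s⟫) s := fun s =>
      (hdP s).hasDerivAt.inner ℝ (hdv s).hasDerivAt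
    have hsum : (∫ s in (0:ℝ)..1, (⟪P s, deriv v s⟫ + ⟪deriv P s, v s⟫))
        = ⟪P 1, v 1⟫ - ⟪P 0, v 0⟫ :=
      integral_eq_sub_of_hasDerivAt (fun s _ => hFd s) (hIA.add hIB)
    rw [intervalIntegral.integral_add hIA hIB] at hsum
    have hperP : Function.Periodic P 1 := fun x => by
      simp only [hPdef]
      rw [hperσ x, periodic_deriv_aux hperη x]
    have hP10 : P 1 = P 0 := by simpa using hperP 0
    have hv10 : v 1 = v 0 := by simpa using hperv 0
    have hF0 : ⟪P 1, v 1⟫ - ⟪P 0, v 0⟫ = (0:ℝ) := by rw [hP10, hv10]; ring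
    have hA : (∫ s in (0:ℝ)..1, ⟪P s, deriv v s⟫) = 0 := by
      have heq : (fun s => ⟪P s, deriv v s⟫) = fun s => σ s * Cv := by
        funext s
        rw [hPdef]
        rw [real_inner_smul_left, real_inner_comm, hCv s]
      rw [heq, intervalIntegral.integral_mul_const, hσmean, zero_mul]
    rw [hA, hF0] at hsum
    linarith
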